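/- Let d and n be positive integers and let s be the unique nonnegative integer with Σ_{i=0}^{s−1} C(n−1+i, n−1) < d ≤ Σ_{i=0}^{s} C(n−1+i, n−1). Then the Borel-fixed ideal I generated by the C(n+d,d) − d largest monomials of degree d in K[x_0,…,x_n] with respect to RevLex has saturation of regularity exactly s + 1, and moreover every Borel-fixed ideal J with constant Hilbert polynomial d satisfies reg(sat(J)) ≥ s + 1. -/

import Mathlib

open Finset

/-- Elementary decreasing move `e⁻_i` : replace one factor `x_i` by `x_{i-1}`. -/
def downAt (i : ℕ) (α : ℕ → ℕ) : ℕ → ℕ :=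
  fun k => if k = i then α i - 1 else if k = i - 1 then α (i - 1) + 1 else α k

/-- Elementary increasing move `e⁺_i` : replace one factor `x_i` by `x_{i+1}`. -/
def upAt (i : ℕ) (α : ℕ → ℕ) : ℕ → ℕ :=
  fun k => if k = i then α i - 1 else if k = i + 1 then α (i + 1) + 1 else α k

/-- `β` is obtained from `α` by one admissible decreasing move. -/
def DownStep (n : ℕ) (α β : ℕ → ℕ) : Prop :=
  ∃ i, 1 ≤ i ∧ i ≤ n ∧ 0 < α i ∧ β = downAt i α

/-- `β` is obtained from `α` by one admissible increasing move. -/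
def UpStep (n : ℕ) (α β : ℕ → ℕ) : Prop :=
  ∃ i, i < n ∧ 0 < α i ∧ β = upAt i α

/-- Borel partial order: `geB n α β` means `x^α ≥_B x^β`, i.e. `β` is reachable
from `α` by a finite sequence of decreasing moves. -/
def geB (n : ℕ) (α β : ℕ → ℕ) : Prop :=
  Relation.ReflTransGen (DownStep n) α β

/-- `Mon n r` : (exponents of) monomials of degree `r` in `x_0,…,x_n`, i.e. `𝒫(n,r)`. -/
def Mon (n r : ℕ) : Set (ℕ → ℕ) :=
  {α | (∀ k, n < k → α k = 0) ∧ ∑ i ∈ Finset.range (n + 1), α i = r}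

/-- A Borel set in `𝒫(n,r)`: closed under admissible increasing moves. -/
def IsBorelSet (n r : ℕ) (B : Set (ℕ → ℕ)) : Prop :=
  B ⊆ Mon n r ∧ ∀ α ∈ B, ∀ β, UpStep n α β → β ∈ B

/-- `σ(j) = ∑_{i=j}^n α_i`. -/
def sumFrom (n j : ℕ) (α : ℕ → ℕ) : ℕ := ∑ i ∈ Finset.Icc j n, α i

/-- Multiplication by the variable `x_i`. -/
def addVar (i : ℕ) (α : ℕ → ℕ) : ℕ → ℕ := fun k => if k = i then α k + 1 else α k

/-- Division by the variable `x_i`. -/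
def subVar (i : ℕ) (α : ℕ → ℕ) : ℕ → ℕ := fun k => if k = i then α k - 1 else α k

/-- The result of applying the composition of decreasing moves `(e⁻_l)^{μ l}` (over all `l`). -/
def applyMoves (μ α : ℕ → ℕ) : ℕ → ℕ := fun k => α k + μ (k + 1) - μ k

/-- The composition of decreasing moves encoded by `μ` is admissible on `α`. -/
def AdmissibleOn (μ α : ℕ → ℕ) : Prop := ∀ k, μ k ≤ α k + μ (k + 1)

/-- `𝔉_α` : admissible compositions of decreasing moves with indices in `[1,j]`
sending `α` inside `B` (contains the identity `μ = 0` as soon as `α ∈ B`). -/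
def MovesFam (j : ℕ) (α : ℕ → ℕ) (B : Set (ℕ → ℕ)) : Set (ℕ → ℕ) :=
  {μ | (∀ l, μ l ≠ 0 → 1 ≤ l ∧ l ≤ j) ∧ AdmissibleOn μ α ∧ applyMoves μ α ∈ B}

/-- `min x^γ` : least index of a variable dividing `x^γ`. -/
noncomputable def minIdx (γ : ℕ → ℕ) : ℕ := sInf {k | γ k ≠ 0}

/-- `x^α >_DegLex x^β` for monomials of the same degree (`x_n ≻ ⋯ ≻ x_0`). -/
def degLexGT (α β : ℕ → ℕ) : Prop :=
  ∃ j, β j < α j ∧ ∀ k, j < k → α k = β k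

/-- `x^α >_RevLex x^β` for monomials of the same degree (`x_n ≻ ⋯ ≻ x_0`). -/
def revLexGT (α β : ℕ → ℕ) : Prop :=
  ∃ j, α j < β j ∧ ∀ k, k < j → α k = β k

/-- The monomial `x_1^k x_0^{d-k}`. -/
def pure01 (d k : ℕ) : ℕ → ℕ :=
  fun m => if m = 1 then k else if m = 0 then d - k else 0

/-- For a Borel set `B` of degree-`d` monomials (points case), the regularity of the
saturation of `⟨B⟩` is the least `s` with `x_1^s x_0^{d-s} ∈ B`. -/
noncomputable def regSat (d : ℕ) (B : Set (ℕ → ℕ)) : ℕ := sInf {s | pure01 d s ∈ B}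

/-- Degree-`d` part of the lexsegment ideal `L = (x_n,…,x_2,x_1^d)`. -/
def lexSegPts (n d : ℕ) : Set (ℕ → ℕ) :=
  {α ∈ Mon n d | (∃ i, 2 ≤ i ∧ i ≤ n ∧ 0 < α i) ∨ d ≤ α 1}

/-- A monomial ideal in `K[x_0,…,x_n]`, given by its set of (exponents of) monomials. -/
def IsMonomialIdeal (n : ℕ) (S : Set (ℕ → ℕ)) : Prop :=
  (∀ α ∈ S, ∀ k, n < k → α k = 0) ∧ ∀ α ∈ S, ∀ k, k ≤ n → addVar k α ∈ S

/-- Strongly stable (Borel-fixed in characteristic 0): `x^α ∈ I`, `x_i ∣ x^α`, `i < j ≤ n`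
implies `x_j x^α / x_i ∈ I`. -/
def StronglyStable (n : ℕ) (S : Set (ℕ → ℕ)) : Prop :=
  ∀ α ∈ S, ∀ i j, i < j → j ≤ n → 0 < α i →
    (fun k => if k = i then α i - 1 else if k = j then α j + 1 else α k) ∈ S

/-- `x^α` is a minimal generator of the monomial ideal `S`. -/
def MinGen (n : ℕ) (S : Set (ℕ → ℕ)) (α : ℕ → ℕ) : Prop :=
  α ∈ S ∧ ∀ k, k ≤ n → 0 < α k → subVar k α ∉ S

-- ===================== auxiliary lemmas =====================

lemma sum_head (α : ℕ → ℕ) (n : ℕ) :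
    ∑ i ∈ Finset.range (n + 1), α i = α 0 + ∑ i ∈ Finset.range n, α (i + 1) := by
  rw [Finset.sum_range_succ']; omega

lemma sum_shift_if (g : ℕ → ℕ) (a : ℕ) (n : ℕ) :
    ∑ i ∈ Finset.range (n + 1), (if i = 0 then a else g i)
      = a + ∑ i ∈ Finset.range n, g (i + 1) := by
  rw [Finset.sum_range_succ']
  simp
  omega

lemma mem_mon_le {m r : ℕ} {α : ℕ → ℕ} (h : α ∈ Mon m r) (i : ℕ) : α i ≤ r := by
  obtain ⟨h1, h2⟩ := h
  rcases le_or_gt i m with hi | hi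
  · calc α i ≤ ∑ j ∈ Finset.range (m + 1), α j :=
        Finset.single_le_sum (fun j _ => Nat.zero_le _) (Finset.mem_range.2 (by omega))
      _ = r := h2
  · rw [h1 i hi]; exact Nat.zero_le r

lemma mon_finite (m r : ℕ) : (Mon m r).Finite := by
  apply Set.Finite.of_finite_image
    (f := fun (α : ℕ → ℕ) (i : Fin (m + 1)) => (⟨min (α i.val) r, by omega⟩ : Fin (r + 1)))
  · exact Set.toFinite _
  · intro α hα β hβ hfe
    funext k
    rcases le_or_gt k m with hk | hk
    · have := congrFun hfe ⟨k, by omega⟩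
      have h1 : min (α k) r = α k := min_eq_left (mem_mon_le hα k)
      have h2 : min (β k) r = β k := min_eq_left (mem_mon_le hβ k)
      simp only [Fin.mk.injEq] at this
      simpa [h1, h2] using this
    · rw [hα.1 k hk, hβ.1 k hk]

lemma mon_zero (m : ℕ) : Mon m 0 = {fun _ => 0} := by
  ext α
  simp only [Mon, Set.mem_setOf_eq, Set.mem_singleton_iff]
  constructor
  · rintro ⟨h1, h2⟩
    funext k
    beta_reduce
    rcases le_or_gt k m with hk | hk
    · exact Finset.sum_eq_zero_iff.1 h2 k (Finset.mem_range.2 (by omega))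
    · exact h1 k hk
  · rintro rfl
    exact ⟨fun k _ => rfl, Finset.sum_const_zero⟩

lemma mon_zero_var (r : ℕ) : Mon 0 r = {fun k => if k = 0 then r else 0} := by
  ext α
  simp only [Mon, Set.mem_setOf_eq, Set.mem_singleton_iff]
  constructor
  · rintro ⟨h1, h2⟩
    simp at h2
    funext k
    beta_reduce
    rcases Nat.eq_zero_or_pos k with rfl | hk
    · rw [if_pos rfl]; exact h2
    · rw [if_neg (by omega)]; exact h1 k hk
  · rintro rfl
    refine ⟨fun k hk => by beta_reduce; rw [if_neg (by omega)], by simp⟩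

lemma mon_ncard : ∀ m r : ℕ, (Mon m r).ncard = (m + r).choose r := by
  intro m
  induction m with
  | zero =>
      intro r
      rw [mon_zero_var, Set.ncard_singleton, Nat.zero_add, Nat.choose_self]
  | succ m ihm =>
      intro r
      induction r with
      | zero => rw [mon_zero, Set.ncard_singleton, Nat.choose_zero_right]
      | succ r ihr =>
        classical
        set A : Set (ℕ → ℕ) := {α | α ∈ Mon (m+1) (r+1) ∧ 0 < α 0} with hA
        set B : Set (ℕ → ℕ) := {α | α ∈ Mon (m+1) (r+1) ∧ α 0 = 0} with hB
        have hAfin : A.Finite := (mon_finite (m+1) (r+1)).subset (fun x hx => hx.1)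
        have hBfin : B.Finite := (mon_finite (m+1) (r+1)).subset (fun x hx => hx.1)
        have hunion : Mon (m+1) (r+1) = A ∪ B := by
          ext α
          constructor
          · intro hα
            rcases Nat.eq_zero_or_pos (α 0) with h0 | h0
            · exact Or.inr ⟨hα, h0⟩
            · exact Or.inl ⟨hα, h0⟩
          · rintro (h | h) <;> exact h.1
        have hdisj : Disjoint A B := by
          rw [Set.disjoint_left]
          rintro α ⟨_, h1⟩ ⟨_, h2⟩
          omega
        have hAcard : A.ncard = (Mon (m+1) r).ncard := by
          have himg : (fun (α : ℕ → ℕ) => fun k => if k = 0 then α 0 - 1 else α k) '' A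
              = Mon (m+1) r := by
            ext γ
            constructor
            · rintro ⟨α, ⟨⟨hsupp, hsum⟩, hpos⟩, rfl⟩
              constructor
              · intro k hk
                beta_reduce
                rw [if_neg (by omega)]
                exact hsupp k hk
              · beta_reduce
                rw [sum_shift_if]
                rw [sum_head] at hsum
                omega
            · intro hγ
              refine ⟨fun k => if k = 0 then γ 0 + 1 else γ k, ⟨⟨?_, ?_⟩, by simp⟩, ?_⟩
              · intro k hk
                beta_reduce
                rw [if_neg (by omega)]
                exact hγ.1 k hk
              · beta_reduce
                rw [sum_shift_if]
                have := hγ.2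
                rw [sum_head] at this
                omega
              · funext k
                beta_reduce
                rcases Nat.eq_zero_or_pos k with rfl | hk
                · simp
                · rw [if_neg (by omega), if_neg (by omega)]
          have hinj : Set.InjOn (fun (α : ℕ → ℕ) => fun k => if k = 0 then α 0 - 1 else α k) A := by
            intro α hα β hβ h
            funext k
            rcases Nat.eq_zero_or_pos k with rfl | hk
            · have := congrFun h 0
              beta_reduce at this
              rw [if_pos rfl, if_pos rfl] at this
              have h1 := hα.2; have h2 := hβ.2
              omega
            · have := congrFun h k
              beta_reduce at this
              have hk0 : ¬ k = 0 := by omega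
              rw [if_neg hk0, if_neg hk0] at this
              exact this
          rw [← himg, Set.ncard_image_of_injOn hinj]
        have hBcard : B.ncard = (Mon m (r+1)).ncard := by
          have himg : (fun (α : ℕ → ℕ) => fun k => α (k + 1)) '' B = Mon m (r+1) := by
            ext γ
            constructor
            · rintro ⟨α, ⟨⟨hsupp, hsum⟩, hz⟩, rfl⟩
              constructor
              · intro k hk
                beta_reduce
                exact hsupp (k+1) (by omega)
              · beta_reduce
                rw [sum_head] at hsum
                omega
            · intro hγ
              refine ⟨fun k => if k = 0 then 0 else γ (k - 1), ⟨⟨?_, ?_⟩, by simp⟩, ?_⟩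
              · intro k hk
                beta_reduce
                rw [if_neg (by omega)]
                exact hγ.1 (k-1) (by omega)
              · beta_reduce
                rw [sum_shift_if]
                simp only [Nat.add_sub_cancel]
                have := hγ.2
                omega
              · funext k
                beta_reduce
                rw [if_neg (by omega)]
                simp
          have hinj : Set.InjOn (fun (α : ℕ → ℕ) => fun k => α (k + 1)) B := by
            intro α hα β hβ h
            funext k
            rcases Nat.eq_zero_or_pos k with rfl | hk
            · rw [hα.2, hβ.2]
            · have := congrFun h (k - 1)
              beta_reduce at this
              rwa [Nat.sub_add_cancel hk] at this
          rw [← himg, Set.ncard_image_of_injOn hinj]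
        rw [hunion, Set.ncard_union_eq hdisj hAfin hBfin, hAcard, hBcard, ihm (r+1), ihr]
        have key := Nat.choose_succ_succ (m + 1 + r) r
        rw [show m + 1 + (r + 1) = m + 1 + r + 1 from by omega, key,
          show m + (r + 1) = m + 1 + r from by omega]

lemma sum_choose (n : ℕ) (hn : 1 ≤ n) : ∀ t : ℕ,
    ∑ i ∈ Finset.range t, (n - 1 + i).choose (n - 1) = (n - 1 + t).choose n := by
  intro t
  induction t with
  | zero => simp [Nat.choose_eq_zero_of_lt (show n - 1 < n by omega)]
  | succ t ih =>
      rw [Finset.sum_range_succ, ih]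
      have key := Nat.choose_succ_succ (n - 1 + t) (n - 1)
      simp only [Nat.succ_eq_add_one] at key
      rw [show n - 1 + 1 = n from by omega] at key
      rw [show n - 1 + (t + 1) = n - 1 + t + 1 from by omega, key]
      omega

lemma low_ncard (n d k : ℕ) (hk : k ≤ d) :
    {β | β ∈ Mon n d ∧ d - k ≤ β 0}.ncard = (n + k).choose k := by
  rw [← mon_ncard n k]
  have himg : (fun (β : ℕ → ℕ) => fun j => if j = 0 then β 0 - (d - k) else β j) ''
      {β | β ∈ Mon n d ∧ d - k ≤ β 0} = Mon n k := by
    ext γ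
    constructor
    · rintro ⟨β, ⟨⟨hsupp, hsum⟩, hβ0⟩, rfl⟩
      constructor
      · intro j hj
        beta_reduce
        rw [if_neg (by omega)]
        exact hsupp j hj
      · beta_reduce
        rw [sum_shift_if]
        rw [sum_head] at hsum
        omega
    · intro hγ
      refine ⟨fun j => if j = 0 then γ 0 + (d - k) else γ j, ⟨⟨?_, ?_⟩, ?_⟩, ?_⟩
      · intro j hj
        beta_reduce
        rw [if_neg (by omega)]
        exact hγ.1 j hj
      · beta_reduce
        rw [sum_shift_if]
        have := hγ.2
        rw [sum_head] at this
        omega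
      · beta_reduce
        rw [if_pos rfl]
        omega
      · funext j
        beta_reduce
        rcases Nat.eq_zero_or_pos j with rfl | hj
        · rw [if_pos rfl, if_pos rfl]
          omega
        · rw [if_neg (by omega), if_neg (by omega)]
  have hinj : Set.InjOn (fun (β : ℕ → ℕ) => fun j => if j = 0 then β 0 - (d - k) else β j)
      {β | β ∈ Mon n d ∧ d - k ≤ β 0} := by
    intro α hα β hβ h
    funext j
    rcases Nat.eq_zero_or_pos j with rfl | hj
    · have := congrFun h 0
      beta_reduce at this
      rw [if_pos rfl, if_pos rfl] at this
      have h1 := hα.2; have h2 := hβ.2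
      omega
    · have := congrFun h j
      beta_reduce at this
      have hj0 : ¬ j = 0 := by omega
      rw [if_neg hj0, if_neg hj0] at this
      exact this
  rw [← himg, Set.ncard_image_of_injOn hinj]

-- ===================== sumFrom machinery =====================

lemma sumFrom_split (α : ℕ → ℕ) {j j' n : ℕ} (h1 : j ≤ j') (h2 : j' ≤ n + 1) :
    sumFrom n j α = ∑ i ∈ Finset.Ico j j', α i + sumFrom n j' α := by
  unfold sumFrom
  rw [← Finset.Ico_add_one_right_eq_Icc, ← Finset.Ico_add_one_right_eq_Icc]
  exact (Finset.sum_Ico_consecutive α h1 h2).symm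

lemma total_split (α : ℕ → ℕ) {j n : ℕ} (h : j ≤ n + 1) :
    ∑ i ∈ Finset.range (n + 1), α i = ∑ i ∈ Finset.range j, α i + sumFrom n j α := by
  unfold sumFrom
  rw [Finset.range_eq_Ico, Finset.range_eq_Ico, ← Finset.Ico_add_one_right_eq_Icc]
  exact (Finset.sum_Ico_consecutive α (Nat.zero_le j) h).symm

lemma sumFrom_succ (α : ℕ → ℕ) {j n : ℕ} (h : j ≤ n) :
    sumFrom n j α = α j + sumFrom n (j + 1) α := by
  rw [sumFrom_split α (show j ≤ j + 1 by omega) (show j + 1 ≤ n + 1 by omega),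
    Nat.Ico_succ_singleton, Finset.sum_singleton]

lemma sumFrom_top (α : ℕ → ℕ) {j n : ℕ} (h : n < j) : sumFrom n j α = 0 := by
  unfold sumFrom
  rw [Finset.Icc_eq_empty (by omega), Finset.sum_empty]

lemma sumFrom_le_total {α : ℕ → ℕ} {n d : ℕ} (hα : α ∈ Mon n d) (j : ℕ) :
    sumFrom n j α ≤ d := by
  rcases le_or_gt j (n + 1) with h | h
  · have h2 := total_split α h
    rw [hα.2] at h2
    omega
  · rw [sumFrom_top α (by omega)]
    exact Nat.zero_le d

lemma sum_upAt (i : ℕ) (α : ℕ → ℕ) (hi : 0 < α i) (s : Finset ℕ) :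
    (∑ k ∈ s, upAt i α k) + (if i ∈ s then 1 else 0)
      = (∑ k ∈ s, α k) + (if i + 1 ∈ s then 1 else 0) := by
  classical
  rw [← Finset.sum_ite_eq' s i (fun _ => 1), ← Finset.sum_ite_eq' s (i+1) (fun _ => 1),
      ← Finset.sum_add_distrib, ← Finset.sum_add_distrib]
  apply Finset.sum_congr rfl
  intro k _
  unfold upAt
  by_cases h1 : k = i
  · subst h1
    rw [if_pos rfl, if_pos rfl, if_neg (by omega : ¬ k = k + 1)]
    omega
  · by_cases h2 : k = i + 1
    · subst h2
      rw [if_neg h1, if_pos rfl, if_neg h1, if_pos rfl]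
      omega
    · rw [if_neg h1, if_neg h2, if_neg h1, if_neg h2]

lemma upAt_mem_mon {n d i : ℕ} {α : ℕ → ℕ} (hα : α ∈ Mon n d) (hi : i < n) (hpos : 0 < α i) :
    upAt i α ∈ Mon n d := by
  obtain ⟨h1, h2⟩ := hα
  constructor
  · intro k hk
    unfold upAt
    rw [if_neg (by omega), if_neg (by omega)]
    exact h1 k hk
  · have key := sum_upAt i α hpos (Finset.range (n + 1))
    rw [if_pos (Finset.mem_range.2 (by omega)), if_pos (Finset.mem_range.2 (by omega))] at key
    omega

lemma mon_eq_of_sumFrom {n d : ℕ} {α β : ℕ → ℕ} (hα : α ∈ Mon n d) (hβ : β ∈ Mon n d)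
    (h : ∀ j, 1 ≤ j → j ≤ n → sumFrom n j α = sumFrom n j β) : α = β := by
  funext k
  rcases Nat.lt_or_ge n k with hk | hk
  · rw [hα.1 k hk, hβ.1 k hk]
  · rcases Nat.eq_zero_or_pos k with rfl | hkpos
    · have ha := total_split α (show 1 ≤ n + 1 by omega)
      have hb := total_split β (show 1 ≤ n + 1 by omega)
      rw [hα.2] at ha
      rw [hβ.2] at hb
      simp only [Finset.sum_range_one] at ha hb
      have hs : sumFrom n 1 α = sumFrom n 1 β := by
        rcases Nat.eq_zero_or_pos n with rfl | hn
        · rw [sumFrom_top α (by omega), sumFrom_top β (by omega)]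
        · exact h 1 le_rfl hn
      omega
    · have ha := sumFrom_succ α hk
      have hb := sumFrom_succ β hk
      have hs1 : sumFrom n k α = sumFrom n k β := h k hkpos hk
      have hs2 : sumFrom n (k + 1) α = sumFrom n (k + 1) β := by
        rcases Nat.lt_or_ge n (k + 1) with hk1 | hk1
        · rw [sumFrom_top α hk1, sumFrom_top β hk1]
        · exact h (k + 1) (by omega) hk1
      omega

lemma reach {n d : ℕ} {J : Set (ℕ → ℕ)} (hJ : IsBorelSet n d J) :
    ∀ N α β, α ∈ J → β ∈ Mon n d →
      (∀ j, 1 ≤ j → j ≤ n → sumFrom n j α ≤ sumFrom n j β) →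
      (∑ j ∈ Finset.Icc 1 n, (sumFrom n j β - sumFrom n j α)) = N →
      β ∈ J := by
  intro N
  induction N using Nat.strong_induction_on with
  | _ N ih =>
    intro α β hαJ hβ hσ hN
    have hα : α ∈ Mon n d := hJ.1 hαJ
    rcases Nat.eq_zero_or_pos N with rfl | hNpos
    · have heq : α = β := by
        apply mon_eq_of_sumFrom hα hβ
        intro j h1 h2
        have h0 := Finset.sum_eq_zero_iff.1 hN j (Finset.mem_Icc.2 ⟨h1, h2⟩)
        have := hσ j h1 h2
        omega
      rwa [← heq]
    · have hex : ∃ j, (1 ≤ j ∧ j ≤ n) ∧ sumFrom n j α < sumFrom n j β := by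
        by_contra hcon
        push_neg at hcon
        have hzero : ∑ j ∈ Finset.Icc 1 n, (sumFrom n j β - sumFrom n j α) = 0 :=
          Finset.sum_eq_zero (fun j hj => by
            have hj' := Finset.mem_Icc.1 hj
            have := hcon j ⟨hj'.1, hj'.2⟩
            omega)
        omega
      obtain ⟨j0, ⟨hj01, hj0n⟩, hj0lt⟩ := hex
      classical
      set js := Nat.findGreatest (fun j => sumFrom n j α < sumFrom n j β) n with hjs
      have hPjs : sumFrom n js α < sumFrom n js β :=
        Nat.findGreatest_spec (P := fun j => sumFrom n j α < sumFrom n j β) hj0n hj0lt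
      have hjs1 : 1 ≤ js :=
        le_trans hj01 (Nat.le_findGreatest (P := fun j => sumFrom n j α < sumFrom n j β) hj0n hj0lt)
      have hjsn : js ≤ n := Nat.findGreatest_le n
      -- mass of α below js is positive
      have hsa := total_split α (show js ≤ n + 1 by omega)
      have hsb := total_split β (show js ≤ n + 1 by omega)
      rw [hα.2] at hsa
      rw [hβ.2] at hsb
      have hlow : 0 < ∑ i ∈ Finset.range js, α i := by omega
      have hexi : ∃ i, i < js ∧ 0 < α i := by
        by_contra hcon
        push_neg at hcon
        have : ∑ i ∈ Finset.range js, α i = 0 :=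
          Finset.sum_eq_zero (fun i hi => by
            have := hcon i (Finset.mem_range.1 hi)
            omega)
        omega
      obtain ⟨i0, hi0lt, hi0pos⟩ := hexi
      set i := Nat.findGreatest (fun i => 0 < α i) (js - 1) with hidef
      have hQi : 0 < α i :=
        Nat.findGreatest_spec (P := fun i => 0 < α i) (show i0 ≤ js - 1 by omega) hi0pos
      have hile : i ≤ js - 1 := Nat.findGreatest_le _
      have himax : ∀ k, i < k → k ≤ js - 1 → α k = 0 := by
        intro k h1 h2
        have := Nat.findGreatest_is_greatest (P := fun i => 0 < α i) h1 h2
        omega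
      have hiltn : i < n := by omega
      -- σ_{i+1} α = σ_{js} α
      have hmid : sumFrom n (i + 1) α = sumFrom n js α := by
        rw [sumFrom_split α (show i + 1 ≤ js by omega) (show js ≤ n + 1 by omega)]
        have hz : ∑ k ∈ Finset.Ico (i + 1) js, α k = 0 :=
          Finset.sum_eq_zero (fun k hk => by
            have := Finset.mem_Ico.1 hk
            exact himax k (by omega) (by omega))
        omega
      have hmid_b : sumFrom n js β ≤ sumFrom n (i + 1) β := by
        rw [sumFrom_split β (show i + 1 ≤ js by omega) (show js ≤ n + 1 by omega)]
        omega
      have huJ : upAt i α ∈ J := hJ.2 α hαJ (upAt i α) ⟨i, hiltn, hQi, rfl⟩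
      have hσu : ∀ j, 1 ≤ j → j ≤ n →
          sumFrom n j (upAt i α) = sumFrom n j α + (if j = i + 1 then 1 else 0) := by
        intro j h1 h2
        have key := sum_upAt i α hQi (Finset.Icc j n)
        unfold sumFrom
        by_cases hji : j ≤ i
        · rw [if_pos (Finset.mem_Icc.2 ⟨hji, by omega⟩),
            if_pos (Finset.mem_Icc.2 ⟨by omega, by omega⟩)] at key
          rw [if_neg (by omega)]
          omega
        · by_cases hji2 : j = i + 1
          · subst hji2
            rw [if_neg (by intro hmem; have := Finset.mem_Icc.1 hmem; omega),
              if_pos (Finset.mem_Icc.2 ⟨by omega, by omega⟩)] at key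
            rw [if_pos rfl]
            omega
          · rw [if_neg (by intro hmem; have := Finset.mem_Icc.1 hmem; omega),
              if_neg (by intro hmem; have := Finset.mem_Icc.1 hmem; omega)] at key
            rw [if_neg hji2]
            omega
      have hσu_le : ∀ j, 1 ≤ j → j ≤ n → sumFrom n j (upAt i α) ≤ sumFrom n j β := by
        intro j h1 h2
        rw [hσu j h1 h2]
        by_cases hj : j = i + 1
        · subst hj
          rw [if_pos rfl]
          omega
        · rw [if_neg hj]
          exact hσ j h1 h2
      have hlt : ∑ j ∈ Finset.Icc 1 n, (sumFrom n j β - sumFrom n j (upAt i α)) < N := by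
        rw [← hN]
        apply Finset.sum_lt_sum
        · intro j hj
          have hj' := Finset.mem_Icc.1 hj
          rw [hσu j hj'.1 hj'.2]
          rcases eq_or_ne j (i + 1) with h | h
          · rw [if_pos h]; omega
          · rw [if_neg h]; omega
        · refine ⟨i + 1, Finset.mem_Icc.2 ⟨by omega, by omega⟩, ?_⟩
          rw [hσu (i + 1) (by omega) (by omega), if_pos rfl]
          omega
      exact ih _ hlt (upAt i α) β huJ hβ hσu_le rfl

-- ===================== pure01 lemmas =====================

lemma pure01_mem_mon {n d t : ℕ} (hn : 1 ≤ n) (ht : t ≤ d) : pure01 d t ∈ Mon n d := by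
  constructor
  · intro k hk
    unfold pure01
    rw [if_neg (by omega), if_neg (by omega)]
  · rw [sum_head]
    have h0 : pure01 d t 0 = d - t := by unfold pure01; norm_num
    have he : ∀ i ∈ Finset.range n, pure01 d t (i + 1) = if i = 0 then t else 0 := by
      intro i _
      unfold pure01
      rcases Nat.eq_zero_or_pos i with rfl | hi
      · norm_num
      · rw [if_neg (by omega), if_neg (by omega), if_neg (by omega)]
    rw [h0, Finset.sum_congr rfl he, Finset.sum_ite_eq' (Finset.range n) 0 (fun _ => t),
      if_pos (Finset.mem_range.2 (by omega))]
    omega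

lemma sumFrom_pure01 {n d t j : ℕ} (hn : 1 ≤ n) (ht : t ≤ d) (h1 : 1 ≤ j) :
    sumFrom n j (pure01 d t) = if j = 1 then t else 0 := by
  rcases eq_or_ne j 1 with rfl | hj
  · rw [if_pos rfl]
    have hm := pure01_mem_mon (n := n) hn ht
    have hts := total_split (pure01 d t) (show 1 ≤ n + 1 by omega)
    rw [hm.2] at hts
    simp only [Finset.sum_range_one] at hts
    have h0 : pure01 d t 0 = d - t := by unfold pure01; norm_num
    omega
  · rw [if_neg hj]
    unfold sumFrom
    apply Finset.sum_eq_zero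
    intro k hk
    have := Finset.mem_Icc.1 hk
    unfold pure01
    rw [if_neg (by omega), if_neg (by omega)]

lemma revlex_asym {α β : ℕ → ℕ} (h1 : revLexGT α β) (h2 : revLexGT β α) : False := by
  obtain ⟨j, hj, hk⟩ := h1
  obtain ⟨j', hj', hk'⟩ := h2
  rcases lt_trichotomy j j' with h | h | h
  · have := hk' j h; omega
  · subst h; omega
  · have := hk j' h; omega

-- ===================== key lemmas =====================

lemma s_lt_d {n d s : ℕ} (hn : 1 ≤ n)
    (hs1 : ∑ i ∈ Finset.range s, (n - 1 + i).choose (n - 1) < d) : s < d := by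
  have hle : s ≤ ∑ i ∈ Finset.range s, (n - 1 + i).choose (n - 1) := by
    calc s = ∑ _i ∈ Finset.range s, 1 := by simp
      _ ≤ ∑ i ∈ Finset.range s, (n - 1 + i).choose (n - 1) :=
        Finset.sum_le_sum (fun i _ => Nat.choose_pos (Nat.le_add_right _ _))
  omega

lemma key_lower (n d s : ℕ) (hn : 1 ≤ n) (hd : 1 ≤ d)
    (hs1 : ∑ i ∈ Finset.range s, (n - 1 + i).choose (n - 1) < d)
    (J : Set (ℕ → ℕ)) (hJ : IsBorelSet n d J) (hJc : (Mon n d \ J).ncard = d)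
    (t : ℕ) (ht : t ≤ s) : pure01 d t ∉ J := by
  intro hmem
  have hds : s < d := s_lt_d hn hs1
  have hall : ∀ β ∈ Mon n d, t ≤ sumFrom n 1 β → β ∈ J := by
    intro β hβ h1
    refine reach hJ _ (pure01 d t) β hmem hβ ?_ rfl
    intro j hj1 hjn
    rw [sumFrom_pure01 hn (by omega) hj1]
    rcases eq_or_ne j 1 with rfl | hj
    · rw [if_pos rfl]; exact h1
    · rw [if_neg hj]; exact Nat.zero_le _
  rcases Nat.eq_zero_or_pos t with rfl | htpos
  · have hempty : Mon n d \ J = ∅ := by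
      ext β
      simp only [Set.mem_diff, Set.mem_empty_iff_false, iff_false, not_and, not_not]
      intro hβ
      exact hall β hβ (Nat.zero_le _)
    rw [hempty, Set.ncard_empty] at hJc
    omega
  · have hsub : Mon n d \ J ⊆ {β | β ∈ Mon n d ∧ d - (t - 1) ≤ β 0} := by
      rintro β ⟨hβm, hβJ⟩
      refine ⟨hβm, ?_⟩
      by_contra hcon
      push_neg at hcon
      apply hβJ
      apply hall β hβm
      have hts := total_split β (show 1 ≤ n + 1 by omega)
      rw [hβm.2] at hts
      simp only [Finset.sum_range_one] at hts
      omega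
    have hfin : ({β | β ∈ Mon n d ∧ d - (t - 1) ≤ β 0}).Finite :=
      (mon_finite n d).subset (fun x hx => hx.1)
    have hle : d ≤ (n + (t - 1)).choose (t - 1) := by
      have hlow := low_ncard n d (t - 1) (show t - 1 ≤ d by omega)
      have h := Set.ncard_le_ncard hsub hfin
      rw [hJc, hlow] at h
      exact h
    have hcs : (n + (t - 1)).choose (t - 1) = (n + (t - 1)).choose n := by
      have h := Nat.choose_symm (show n ≤ n + (t - 1) from Nat.le_add_right _ _)
      rw [show n + (t - 1) - n = t - 1 from by omega] at h
      omega
    have hmono : (n + (t - 1)).choose n ≤ (n - 1 + s).choose n :=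
      Nat.choose_le_choose n (by omega)
    rw [sum_choose n hn s] at hs1
    omega

lemma top_mem (n d : ℕ) (hn : 1 ≤ n) (hd : 1 ≤ d)
    (J : Set (ℕ → ℕ)) (hJ : IsBorelSet n d J) (hJc : (Mon n d \ J).ncard = d) :
    pure01 d d ∈ J := by
  by_contra hmem
  have hall : ∀ t, t ≤ d → pure01 d t ∉ J := by
    intro t ht hmem'
    apply hmem
    refine reach hJ _ (pure01 d t) (pure01 d d) hmem' (pure01_mem_mon hn le_rfl) ?_ rfl
    intro j h1 h2
    rw [sumFrom_pure01 hn ht h1, sumFrom_pure01 hn le_rfl h1]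
    split_ifs <;> omega
  have hsub : (fun t => pure01 d t) '' Set.Iic d ⊆ Mon n d \ J := by
    rintro β ⟨t, ht, rfl⟩
    exact ⟨pure01_mem_mon hn ht, hall t ht⟩
  have hinj : Set.InjOn (fun t => pure01 d t) (Set.Iic d) := by
    intro a _ b _ h
    have := congrFun h 1
    simpa [pure01] using this
  have hcard := Set.ncard_le_ncard hsub ((mon_finite n d).subset Set.diff_subset)
  rw [Set.ncard_image_of_injOn hinj, ← Finset.coe_Iic, Set.ncard_coe_finset,
    Nat.card_Iic, hJc] at hcard
  omega

lemma reg_lb (n d s : ℕ) (hn : 1 ≤ n) (hd : 1 ≤ d)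
    (hs1 : ∑ i ∈ Finset.range s, (n - 1 + i).choose (n - 1) < d)
    (J : Set (ℕ → ℕ)) (hJ : IsBorelSet n d J) (hJc : (Mon n d \ J).ncard = d) :
    s + 1 ≤ regSat d J := by
  have hne : {t | pure01 d t ∈ J}.Nonempty := ⟨d, top_mem n d hn hd J hJ hJc⟩
  have hmem := Nat.sInf_mem hne
  by_contra hcon
  push_neg at hcon
  unfold regSat at hcon
  exact key_lower n d s hn hd hs1 J hJ hJc _ (by omega) hmem

/-- the RevLex segment ideal of d points has saturation of regularity
exactly s + 1, and this is the minimum over all Borel ideals of d points. -/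
theorem stmt_16 (n d s : ℕ) (hn : 1 ≤ n) (hd : 1 ≤ d)
    (hs1 : ∑ i ∈ Finset.range s, (n - 1 + i).choose (n - 1) < d)
    (hs2 : d ≤ ∑ i ∈ Finset.range (s + 1), (n - 1 + i).choose (n - 1))
    (S : Set (ℕ → ℕ)) (hS : S ⊆ Mon n d)
    (hcard : S.ncard = (n + d).choose d - d)
    (hseg : ∀ α ∈ S, ∀ β ∈ Mon n d \ S, revLexGT α β) :
    regSat d S = s + 1 ∧
    ∀ J : Set (ℕ → ℕ), IsBorelSet n d J → (Mon n d \ J).ncard = d →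
      s + 1 ≤ regSat d J := by
  have hds : s < d := s_lt_d hn hs1
  have hSb : IsBorelSet n d S := by
    refine ⟨hS, ?_⟩
    rintro α hα β ⟨i, hin, hpos, rfl⟩
    by_contra hβ
    have hβm : upAt i α ∈ Mon n d := upAt_mem_mon (hS hα) hin hpos
    have h1 := hseg α hα (upAt i α) ⟨hβm, hβ⟩
    have h2 : revLexGT (upAt i α) α := by
      refine ⟨i, ?_, ?_⟩
      · show upAt i α i < α i
        unfold upAt
        rw [if_pos rfl]
        omega
      · intro k hk
        show upAt i α k = α k
        unfold upAt
        rw [if_neg (by omega), if_neg (by omega)]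
    exact revlex_asym h1 h2
  have hcompl : (Mon n d \ S).ncard = d := by
    have h1 : d ≤ (n + d).choose d := by
      have h2 : (d + 1).choose d = d + 1 := Nat.choose_succ_self_right d
      have h3 : (d + 1).choose d ≤ (n + d).choose d := Nat.choose_le_choose d (by omega)
      omega
    rw [Set.ncard_diff hS ((mon_finite n d).subset hS), mon_ncard, hcard]
    omega
  have hmemS : pure01 d (s + 1) ∈ S := by
    by_contra hmem
    have hα0m : pure01 d (s + 1) ∈ Mon n d := pure01_mem_mon hn (by omega)
    have hBsub : {β | β ∈ Mon n d ∧ d - s ≤ β 0} ⊆ Mon n d \ S := by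
      rintro β ⟨hβm, hβ0⟩
      refine ⟨hβm, ?_⟩
      intro hβS
      have h1 := hseg β hβS (pure01 d (s + 1)) ⟨hα0m, hmem⟩
      have h2 : revLexGT (pure01 d (s + 1)) β := by
        refine ⟨0, ?_, fun k hk => absurd hk (Nat.not_lt_zero k)⟩
        show pure01 d (s + 1) 0 < β 0
        unfold pure01
        norm_num
        omega
      exact revlex_asym h1 h2
    have hnotin : pure01 d (s + 1) ∉ {β | β ∈ Mon n d ∧ d - s ≤ β 0} := by
      rintro ⟨_, h⟩
      have h0 : pure01 d (s + 1) 0 = d - (s + 1) := by unfold pure01; norm_num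
      omega
    have hfinB : ({β | β ∈ Mon n d ∧ d - s ≤ β 0}).Finite :=
      (mon_finite n d).subset (fun x hx => hx.1)
    have hins : insert (pure01 d (s + 1)) {β | β ∈ Mon n d ∧ d - s ≤ β 0} ⊆ Mon n d \ S := by
      rw [Set.insert_subset_iff]
      exact ⟨⟨hα0m, hmem⟩, hBsub⟩
    have hc1 : (n + s).choose s + 1 ≤ d := by
      have hlowS := low_ncard n d s (show s ≤ d by omega)
      have h := Set.ncard_le_ncard hins ((mon_finite n d).subset Set.diff_subset)
      rw [Set.ncard_insert_of_notMem hnotin hfinB, hlowS, hcompl] at h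
      exact h
    have hcs : (n + s).choose s = (n + s).choose n := by
      have h := Nat.choose_symm (show n ≤ n + s from Nat.le_add_right _ _)
      rw [show n + s - n = s from by omega] at h
      omega
    rw [sum_choose n hn (s + 1), show n - 1 + (s + 1) = n + s from by omega] at hs2
    omega
  constructor
  · have hub : regSat d S ≤ s + 1 := Nat.sInf_le hmemS
    have hlb : s + 1 ≤ regSat d S := reg_lb n d s hn hd hs1 S hSb hcompl
    omega
  · intro J hJ hJc
    exact reg_lb n d s hn hd hs1 J hJ hJc
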